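/- Let (X,μ) be a finite measure space, n ≥ 3, m₁, m₂ ∈ L^n(X), and let (G_τ)_{τ≥τ₀} be a family of linear operators satisfying ‖G_τ f‖_{L²} ≤ (C₀/τ)‖f‖_{L²} and ‖G_τ f‖_{L^{2n/(n−2)}} ≤ C₀‖f‖_{L^{2n/(n+2)}} for all f. Then the operator norm of f ↦ m₁ G_τ(m₂ f) on L²(X) tends to 0 as τ → ∞. -/

import Mathlib

open MeasureTheory ENNReal


lemma aux_holder {X : Type*} [MeasurableSpace X] {μ : Measure X} {p q r : ℝ≥0∞}
    {φ g : X → ℂ} (hφ : AEStronglyMeasurable φ μ) (hg : AEStronglyMeasurable g μ)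
    (hpqr : 1 / p = 1 / q + 1 / r) :
    eLpNorm (fun x => φ x * g x) p μ ≤ eLpNorm φ q μ * eLpNorm g r μ := by
  haveI : ENNReal.HolderTriple q r p := ⟨by simpa only [one_div] using hpqr.symm⟩
  have := eLpNorm_smul_le_mul_eLpNorm (f := g) (φ := φ) hg hφ (p := q) (q := r) (r := p)
  exact this

lemma aux_bdd_mul {X : Type*} [MeasurableSpace X] {μ : Measure X} {p : ℝ≥0∞}
    {φ g : X → ℂ} {M : ℝ} (hM : 0 ≤ M) (h : ∀ x, ‖φ x‖ ≤ M) :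
    eLpNorm (fun x => φ x * g x) p μ ≤ ENNReal.ofReal M * eLpNorm g p μ := by
  have h1 : eLpNorm (fun x => φ x * g x) p μ ≤ eLpNorm (fun x => (M : ℂ) * g x) p μ := by
    refine eLpNorm_mono fun x => ?_
    rw [norm_mul, norm_mul, Complex.norm_real, Real.norm_eq_abs, abs_of_nonneg hM]
    exact mul_le_mul_of_nonneg_right (h x) (norm_nonneg _)
  have h2 : eLpNorm (fun x => (M : ℂ) * g x) p μ = ‖(M : ℂ)‖₊ • eLpNorm g p μ :=
    eLpNorm_const_smul (M : ℂ) g p μ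
  refine h1.trans ?_
  rw [h2, ENNReal.smul_def, smul_eq_mul]
  have : (‖(M : ℂ)‖₊ : ℝ≥0∞) = ENNReal.ofReal M := by
    rw [← ENNReal.ofReal_coe_nnreal, coe_nnnorm, Complex.norm_real, Real.norm_eq_abs, abs_of_nonneg hM]
  rw [this]

lemma aux_trunc {X : Type*} [MeasurableSpace X] {μ : Measure X} {p : ℝ≥0∞}
    {m : X → ℂ} (hm : MemLp m p μ) {δ : ℝ} (hδ : 0 < δ) :
    ∃ (a b : X → ℂ) (M : ℝ), 0 < M ∧ (∀ x, m x = a x + b x) ∧ (∀ x, ‖a x‖ ≤ M) ∧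
      (∀ x, ‖a x‖ ≤ ‖m x‖) ∧ AEStronglyMeasurable a μ ∧ AEStronglyMeasurable b μ ∧
      eLpNorm a p μ ≤ eLpNorm m p μ ∧ eLpNorm b p μ ≤ ENNReal.ofReal δ := by
  obtain ⟨m₀, sm, hm₀⟩ := hm.1
  have hm' : MemLp m₀ p μ := hm.ae_eq hm₀
  obtain ⟨M, hM0, hMle⟩ := hm'.eLpNorm_indicator_norm_ge_pos_le sm hδ
  refine ⟨fun x => if ‖m x‖ < M then m x else 0, fun x => if ‖m x‖ < M then 0 else m x, M,
    hM0, fun x => ?_, fun x => ?_, fun x => ?_, ?_, ?_, ?_, ?_⟩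
  · dsimp only; split_ifs <;> simp
  · dsimp only; split_ifs with h
    · exact h.le
    · simpa using hM0.le
  · dsimp only; split_ifs <;> simp
  · refine ⟨fun x => if ‖m₀ x‖ < M then m₀ x else 0, ?_, ?_⟩
    · exact StronglyMeasurable.ite (measurableSet_lt sm.norm.measurable measurable_const) sm
        stronglyMeasurable_const
    · filter_upwards [hm₀] with x hx; rw [hx]
  · refine ⟨fun x => if ‖m₀ x‖ < M then 0 else m₀ x, ?_, ?_⟩
    · exact StronglyMeasurable.ite (measurableSet_lt sm.norm.measurable measurable_const)
        stronglyMeasurable_const sm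
    · filter_upwards [hm₀] with x hx; rw [hx]
  · refine eLpNorm_mono fun x => ?_
    split_ifs <;> simp
  · have heq : (fun x => if ‖m x‖ < M then 0 else m x) =ᵐ[μ]
        ({ x | M ≤ (‖m₀ x‖₊ : ℝ) }.indicator m₀) := by
      filter_upwards [hm₀] with x hx
      rw [hx]
      by_cases h : ‖m₀ x‖ < M
      · rw [if_pos h, Set.indicator_of_notMem]
        simpa [Set.mem_setOf_eq, coe_nnnorm] using h
      · rw [if_neg h, Set.indicator_of_mem]
        simpa [Set.mem_setOf_eq, coe_nnnorm] using not_lt.mp h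
    rw [eLpNorm_congr_ae heq]
    exact hMle

lemma aux_exp1 (n : ℕ) (hn : 3 ≤ n) :
    1 / (2:ℝ≥0∞) = 1 / (n:ℝ≥0∞) + 1 / ((2 * n : ℝ≥0∞) / ((n:ℝ≥0∞) - 2)) := by
  have hn0 : (n:ℝ≥0∞) ≠ 0 := Nat.cast_ne_zero.mpr (by omega)
  have hnt : (n:ℝ≥0∞) ≠ ⊤ := ENNReal.natCast_ne_top n
  have h2n0 : (2:ℝ≥0∞) * n ≠ 0 := by simp [hn0]
  have h2le : (2:ℝ≥0∞) ≤ n := by exact_mod_cast (by omega : (2:ℕ) ≤ n)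
  have e1 : 1/(n:ℝ≥0∞) = 2/(2*n) := by
    have := ENNReal.mul_div_mul_left (c := 2) 1 (n:ℝ≥0∞) two_ne_zero ENNReal.ofNat_ne_top
    rw [mul_one] at this; exact this.symm
  rw [one_div ((2 * (n:ℝ≥0∞))/((n:ℝ≥0∞) - 2)),
    ENNReal.inv_div (Or.inr (ENNReal.mul_ne_top ENNReal.ofNat_ne_top hnt)) (Or.inr h2n0),
    e1, ENNReal.div_add_div_same, add_tsub_cancel_of_le h2le, mul_comm (2:ℝ≥0∞) (n:ℝ≥0∞)]
  have := ENNReal.mul_div_mul_left (c := (n:ℝ≥0∞)) 1 2 hn0 hnt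
  rw [mul_one] at this; exact this.symm

lemma aux_exp2 (n : ℕ) (hn : 3 ≤ n) :
    1 / ((2 * n : ℝ≥0∞) / ((n:ℝ≥0∞) + 2)) = 1 / (n:ℝ≥0∞) + 1 / (2:ℝ≥0∞) := by
  have hn0 : (n:ℝ≥0∞) ≠ 0 := Nat.cast_ne_zero.mpr (by omega)
  have hnt : (n:ℝ≥0∞) ≠ ⊤ := ENNReal.natCast_ne_top n
  have h2n0 : (2:ℝ≥0∞) * n ≠ 0 := by simp [hn0]
  have e1 : 1/(n:ℝ≥0∞) = 2/(2*n) := by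
    have := ENNReal.mul_div_mul_left (c := 2) 1 (n:ℝ≥0∞) two_ne_zero ENNReal.ofNat_ne_top
    rw [mul_one] at this; exact this.symm
  have e2 : 1/(2:ℝ≥0∞) = n/(2*n) := by
    rw [mul_comm (2:ℝ≥0∞) (n:ℝ≥0∞)]
    have := ENNReal.mul_div_mul_left (c := (n:ℝ≥0∞)) 1 2 hn0 hnt
    rw [mul_one] at this; exact this.symm
  rw [one_div ((2 * (n:ℝ≥0∞))/((n:ℝ≥0∞) + 2)),
    ENNReal.inv_div (Or.inr (ENNReal.mul_ne_top ENNReal.ofNat_ne_top hnt)) (Or.inr h2n0),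
    e1, e2, ENNReal.div_add_div_same, add_comm (2:ℝ≥0∞) (n:ℝ≥0∞)]

/-- Lemma 3.3, limit (3.2): with the family of operators `G_τ` satisfying
`‖G_τ f‖_{L²} ≤ (C₀/τ)‖f‖_{L²}` and `‖G_τ f‖_{L^{2n/(n−2)}} ≤ C₀ ‖f‖_{L^{2n/(n+2)}}`
for `τ ≥ τ₀`, and `m₁, m₂ ∈ Lⁿ` on a finite measure space, the operator norm of
`f ↦ m₁ G_τ(m₂ f)` on `L²` tends to `0` as `τ → ∞`. -/
theorem stmt_7 {X : Type*} [MeasurableSpace X] (μ : Measure X) [IsFiniteMeasure μ]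
    (n : ℕ) (hn : 3 ≤ n) (τ₀ C₀ : ℝ) (hτ₀ : 0 < τ₀) (hC₀ : 0 ≤ C₀)
    (G : ℝ → (X → ℂ) →ₗ[ℂ] (X → ℂ))
    (hGmeas : ∀ τ (f : X → ℂ), AEStronglyMeasurable (G τ f) μ)
    (hG2 : ∀ τ, τ₀ ≤ τ → ∀ f : X → ℂ,
      eLpNorm (G τ f) 2 μ ≤ ENNReal.ofReal (C₀ / τ) * eLpNorm f 2 μ)
    (hGp : ∀ τ, τ₀ ≤ τ → ∀ f : X → ℂ,
      eLpNorm (G τ f) ((2 * n : ℝ≥0∞) / ((n : ℝ≥0∞) - 2)) μ ≤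
        ENNReal.ofReal C₀ * eLpNorm f ((2 * n : ℝ≥0∞) / ((n : ℝ≥0∞) + 2)) μ)
    (m₁ m₂ : X → ℂ) (hm₁ : MemLp m₁ (n : ℝ≥0∞) μ) (hm₂ : MemLp m₂ (n : ℝ≥0∞) μ) :
    ∀ ε : ℝ, 0 < ε → ∃ T : ℝ, ∀ τ, T ≤ τ → ∀ f : X → ℂ, MemLp f 2 μ →
      eLpNorm (fun x => m₁ x * G τ (fun y => m₂ y * f y) x) 2 μ ≤
        ENNReal.ofReal ε * eLpNorm f 2 μ := by
  intro ε hε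
  set K₁ : ℝ := (eLpNorm m₁ (n : ℝ≥0∞) μ).toReal with hK₁def
  set K₂ : ℝ := (eLpNorm m₂ (n : ℝ≥0∞) μ).toReal with hK₂def
  have hK₁0 : 0 ≤ K₁ := ENNReal.toReal_nonneg
  have hK₂0 : 0 ≤ K₂ := ENNReal.toReal_nonneg
  have hm₁eq : eLpNorm m₁ (n : ℝ≥0∞) μ = ENNReal.ofReal K₁ := (ofReal_toReal hm₁.2.ne).symm
  have hm₂eq : eLpNorm m₂ (n : ℝ≥0∞) μ = ENNReal.ofReal K₂ := (ofReal_toReal hm₂.2.ne).symm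
  set D : ℝ := (C₀ + 1) * (K₁ + K₂ + 1) with hDdef
  have hD : 0 < D := by positivity
  set δ : ℝ := (ε / 3) / D with hδdef
  have hδ : 0 < δ := by positivity
  have hδD : δ * D = ε / 3 := div_mul_cancel₀ _ hD.ne'
  have hδ1 : K₁ * C₀ * δ ≤ ε / 3 := by
    have hle : K₁ * C₀ ≤ D := by nlinarith
    calc K₁ * C₀ * δ ≤ D * δ := mul_le_mul_of_nonneg_right hle hδ.le
      _ = ε / 3 := by rw [mul_comm]; exact hδD
  have hδ2 : δ * C₀ * K₂ ≤ ε / 3 := by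
    have hle : C₀ * K₂ ≤ D := by nlinarith
    calc δ * C₀ * K₂ = C₀ * K₂ * δ := by ring
      _ ≤ D * δ := mul_le_mul_of_nonneg_right hle hδ.le
      _ = ε / 3 := by rw [mul_comm]; exact hδD
  obtain ⟨a₁, b₁, M₁, hM₁0, hsplit₁, ha₁bdd, ha₁le, ha₁m, hb₁m, ha₁n, hb₁n⟩ :=
    aux_trunc hm₁ hδ
  obtain ⟨a₂, b₂, M₂, hM₂0, hsplit₂, ha₂bdd, ha₂le, ha₂m, hb₂m, ha₂n, hb₂n⟩ :=
    aux_trunc hm₂ hδ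
  refine ⟨max τ₀ (3 * M₁ * M₂ * C₀ / ε + 1), fun τ hτ f hf => ?_⟩
  have hττ₀ : τ₀ ≤ τ := le_trans (le_max_left _ _) hτ
  have hτpos : 0 < τ := lt_of_lt_of_le hτ₀ hττ₀
  have hT1r : M₁ * (C₀ / τ) * M₂ ≤ ε / 3 := by
    have h1 : 3 * M₁ * M₂ * C₀ / ε + 1 ≤ τ := le_trans (le_max_right _ _) hτ
    have h2 : ε * (3 * M₁ * M₂ * C₀ / ε) = 3 * M₁ * M₂ * C₀ := mul_div_cancel₀ _ hε.ne'
    have h3 : 3 * M₁ * M₂ * C₀ ≤ ε * τ := by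
      nlinarith [mul_le_mul_of_nonneg_left h1 hε.le]
    have h4 : M₁ * (C₀ / τ) * M₂ = M₁ * C₀ * M₂ / τ := by ring
    rw [h4, div_le_div_iff₀ hτpos (by norm_num : (0:ℝ) < 3)]
    nlinarith
  have hfun : (fun y => m₂ y * f y) = (fun y => a₂ y * f y) + (fun y => b₂ y * f y) := by
    funext y; simp only [Pi.add_apply]; rw [hsplit₂ y, add_mul]
  have hGsum : ∀ x, G τ (fun y => m₂ y * f y) x
      = G τ (fun y => a₂ y * f y) x + G τ (fun y => b₂ y * f y) x := by
    intro x; rw [hfun, map_add]; rfl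
  have hptw : (fun x => m₁ x * G τ (fun y => m₂ y * f y) x)
      = (fun x => a₁ x * G τ (fun y => a₂ y * f y) x) +
        ((fun x => a₁ x * G τ (fun y => b₂ y * f y) x) +
         (fun x => b₁ x * G τ (fun y => m₂ y * f y) x)) := by
    funext x
    simp only [Pi.add_apply]
    rw [hsplit₁ x, hGsum x]
    ring
  have hmeas1 : AEStronglyMeasurable (fun x => a₁ x * G τ (fun y => a₂ y * f y) x) μ :=
    ha₁m.mul (hGmeas τ _)
  have hmeas2 : AEStronglyMeasurable (fun x => a₁ x * G τ (fun y => b₂ y * f y) x) μ :=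
    ha₁m.mul (hGmeas τ _)
  have hmeas3 : AEStronglyMeasurable (fun x => b₁ x * G τ (fun y => m₂ y * f y) x) μ :=
    hb₁m.mul (hGmeas τ _)
  -- term 1
  have hb1 : eLpNorm (fun x => a₁ x * G τ (fun y => a₂ y * f y) x) 2 μ ≤
      ENNReal.ofReal (ε / 3) * eLpNorm f 2 μ := by
    calc eLpNorm (fun x => a₁ x * G τ (fun y => a₂ y * f y) x) 2 μ
        ≤ ENNReal.ofReal M₁ * eLpNorm (G τ (fun y => a₂ y * f y)) 2 μ :=
          aux_bdd_mul hM₁0.le ha₁bdd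
      _ ≤ ENNReal.ofReal M₁ *
          (ENNReal.ofReal (C₀ / τ) * eLpNorm (fun y => a₂ y * f y) 2 μ) :=
          mul_le_mul_right (hG2 τ hττ₀ _) _
      _ ≤ ENNReal.ofReal M₁ *
          (ENNReal.ofReal (C₀ / τ) * (ENNReal.ofReal M₂ * eLpNorm f 2 μ)) := by
          gcongr
          exact aux_bdd_mul hM₂0.le ha₂bdd
      _ = ENNReal.ofReal (M₁ * (C₀ / τ) * M₂) * eLpNorm f 2 μ := by
          rw [ENNReal.ofReal_mul (mul_nonneg hM₁0.le (div_nonneg hC₀ hτpos.le)),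
            ENNReal.ofReal_mul hM₁0.le]
          ring
      _ ≤ ENNReal.ofReal (ε / 3) * eLpNorm f 2 μ :=
          mul_le_mul_left (ENNReal.ofReal_le_ofReal hT1r) _
  -- term 2
  have hb2 : eLpNorm (fun x => a₁ x * G τ (fun y => b₂ y * f y) x) 2 μ ≤
      ENNReal.ofReal (ε / 3) * eLpNorm f 2 μ := by
    calc eLpNorm (fun x => a₁ x * G τ (fun y => b₂ y * f y) x) 2 μ
        ≤ eLpNorm a₁ (n : ℝ≥0∞) μ *
            eLpNorm (G τ (fun y => b₂ y * f y)) ((2 * n : ℝ≥0∞) / ((n : ℝ≥0∞) - 2)) μ :=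
          aux_holder ha₁m (hGmeas τ _) (aux_exp1 n hn)
      _ ≤ ENNReal.ofReal K₁ *
          (ENNReal.ofReal C₀ * eLpNorm (fun y => b₂ y * f y) ((2 * n : ℝ≥0∞) / ((n : ℝ≥0∞) + 2)) μ) :=
          mul_le_mul (ha₁n.trans_eq hm₁eq) (hGp τ hττ₀ _) zero_le zero_le
      _ ≤ ENNReal.ofReal K₁ *
          (ENNReal.ofReal C₀ * (eLpNorm b₂ (n : ℝ≥0∞) μ * eLpNorm f 2 μ)) := by
          gcongr
          exact aux_holder hb₂m hf.1 (aux_exp2 n hn)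
      _ ≤ ENNReal.ofReal K₁ *
          (ENNReal.ofReal C₀ * (ENNReal.ofReal δ * eLpNorm f 2 μ)) := by
          gcongr
      _ = ENNReal.ofReal (K₁ * C₀ * δ) * eLpNorm f 2 μ := by
          rw [ENNReal.ofReal_mul (mul_nonneg hK₁0 hC₀), ENNReal.ofReal_mul hK₁0]
          ring
      _ ≤ ENNReal.ofReal (ε / 3) * eLpNorm f 2 μ :=
          mul_le_mul_left (ENNReal.ofReal_le_ofReal hδ1) _
  -- term 3
  have hb3 : eLpNorm (fun x => b₁ x * G τ (fun y => m₂ y * f y) x) 2 μ ≤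
      ENNReal.ofReal (ε / 3) * eLpNorm f 2 μ := by
    calc eLpNorm (fun x => b₁ x * G τ (fun y => m₂ y * f y) x) 2 μ
        ≤ eLpNorm b₁ (n : ℝ≥0∞) μ *
            eLpNorm (G τ (fun y => m₂ y * f y)) ((2 * n : ℝ≥0∞) / ((n : ℝ≥0∞) - 2)) μ :=
          aux_holder hb₁m (hGmeas τ _) (aux_exp1 n hn)
      _ ≤ ENNReal.ofReal δ *
          (ENNReal.ofReal C₀ * eLpNorm (fun y => m₂ y * f y) ((2 * n : ℝ≥0∞) / ((n : ℝ≥0∞) + 2)) μ) :=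
          mul_le_mul hb₁n (hGp τ hττ₀ _) zero_le zero_le
      _ ≤ ENNReal.ofReal δ *
          (ENNReal.ofReal C₀ * (eLpNorm m₂ (n : ℝ≥0∞) μ * eLpNorm f 2 μ)) := by
          gcongr
          exact aux_holder hm₂.1 hf.1 (aux_exp2 n hn)
      _ = ENNReal.ofReal (δ * C₀ * K₂) * eLpNorm f 2 μ := by
          rw [hm₂eq, ENNReal.ofReal_mul (mul_nonneg hδ.le hC₀), ENNReal.ofReal_mul hδ.le]
          ring
      _ ≤ ENNReal.ofReal (ε / 3) * eLpNorm f 2 μ :=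
          mul_le_mul_left (ENNReal.ofReal_le_ofReal hδ2) _
  calc eLpNorm (fun x => m₁ x * G τ (fun y => m₂ y * f y) x) 2 μ
      = eLpNorm ((fun x => a₁ x * G τ (fun y => a₂ y * f y) x) +
          ((fun x => a₁ x * G τ (fun y => b₂ y * f y) x) +
           (fun x => b₁ x * G τ (fun y => m₂ y * f y) x))) 2 μ := by rw [hptw]
    _ ≤ eLpNorm (fun x => a₁ x * G τ (fun y => a₂ y * f y) x) 2 μ +
        eLpNorm ((fun x => a₁ x * G τ (fun y => b₂ y * f y) x) +
           (fun x => b₁ x * G τ (fun y => m₂ y * f y) x)) 2 μ :=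
        eLpNorm_add_le hmeas1 (hmeas2.add hmeas3) one_le_two
    _ ≤ eLpNorm (fun x => a₁ x * G τ (fun y => a₂ y * f y) x) 2 μ +
        (eLpNorm (fun x => a₁ x * G τ (fun y => b₂ y * f y) x) 2 μ +
         eLpNorm (fun x => b₁ x * G τ (fun y => m₂ y * f y) x) 2 μ) :=
        add_le_add_right (eLpNorm_add_le hmeas2 hmeas3 one_le_two) _
    _ ≤ ENNReal.ofReal (ε / 3) * eLpNorm f 2 μ +
        (ENNReal.ofReal (ε / 3) * eLpNorm f 2 μ + ENNReal.ofReal (ε / 3) * eLpNorm f 2 μ) :=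
        add_le_add hb1 (add_le_add hb2 hb3)
    _ = (ENNReal.ofReal (ε / 3) + (ENNReal.ofReal (ε / 3) + ENNReal.ofReal (ε / 3))) *
          eLpNorm f 2 μ := by ring
    _ = ENNReal.ofReal ε * eLpNorm f 2 μ := by
        rw [← ENNReal.ofReal_add (by positivity) (by positivity),
          ← ENNReal.ofReal_add (by positivity) (by positivity),
          show ε / 3 + (ε / 3 + ε / 3) = ε by ring]
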